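/- arXiv:2504.17552 — 2 statements merged into one kernel-verified Lean document; each statement's English description precedes it below -/
import Mathlib

section
/- Let A and B be N×N Hermitian matrices with eigenvalues λ₁(A) ≤ ... ≤ λ_N(A) and λ₁(B) ≤ ... ≤ λ_N(B). Then Σ_{i=1}^N (λ_i(A) − λ_i(B))² ≤ Tr[(A−B)²]. -/
open Matrix

section HWaux

lemma HW_rearr {n : ℕ} (f g : Fin n → ℝ) (π : Equiv.Perm (Fin n)) :
    ∑ i, f i * g (π i) ≤ ∑ i, f (Tuple.sort f i) * g (Tuple.sort g i) := by
  set sf := Tuple.sort f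
  set sg := Tuple.sort g
  have hF : Monotone (f ∘ sf) := Tuple.monotone_sort f
  have hG : Monotone (g ∘ sg) := Tuple.monotone_sort g
  have hmono : Monovary (f ∘ sf) (g ∘ sg) := by
    intro i j hij
    rcases le_or_gt i j with h | h
    · exact hF h
    · exact absurd (hG h.le) (not_le.2 hij)
  have key := hmono.sum_mul_comp_perm_le_sum_mul (σ := (sf.trans π).trans sg.symm)
  calc ∑ i, f i * g (π i) = ∑ i, f (sf i) * g (π (sf i)) :=
        (Equiv.sum_comp sf (fun i => f i * g (π i))).symm
    _ = ∑ i, (f ∘ sf) i * (g ∘ sg) (((sf.trans π).trans sg.symm) i) := by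
        simp [Function.comp]
    _ ≤ ∑ i, (f ∘ sf) i * (g ∘ sg) i := key
    _ = ∑ i, f (sf i) * g (sg i) := rfl

lemma HW_ds {n : ℕ} (f g : Fin n → ℝ) (S : Matrix (Fin n) (Fin n) ℝ)
    (hS : S ∈ doublyStochastic ℝ (Fin n)) :
    ∑ i, ∑ j, S i j * (f i * g j) ≤ ∑ i, f (Tuple.sort f i) * g (Tuple.sort g i) := by
  obtain ⟨w, hw0, hw1, hw2⟩ := exists_eq_sum_perm_of_mem_doublyStochastic hS
  have hSij : ∀ i j, S i j = ∑ σ : Equiv.Perm (Fin n), if σ i = j then w σ else 0 := by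
    intro i j
    rw [← hw2]
    simp [Equiv.Perm.permMatrix, PEquiv.toMatrix_apply, Equiv.toPEquiv_apply, Matrix.sum_apply,
      mul_ite]
  calc ∑ i, ∑ j, S i j * (f i * g j)
      = ∑ i, ∑ σ : Equiv.Perm (Fin n), w σ * (f i * g (σ i)) := by
        refine Finset.sum_congr rfl fun i _ => ?_
        calc ∑ j, S i j * (f i * g j)
            = ∑ j, ∑ σ : Equiv.Perm (Fin n), (if σ i = j then w σ else 0) * (f i * g j) := by
              simp only [hSij, Finset.sum_mul]
          _ = ∑ σ : Equiv.Perm (Fin n), ∑ j, (if σ i = j then w σ else 0) * (f i * g j) :=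
              Finset.sum_comm
          _ = ∑ σ : Equiv.Perm (Fin n), w σ * (f i * g (σ i)) := by
              refine Finset.sum_congr rfl fun σ _ => ?_
              simp [ite_mul]
    _ = ∑ σ : Equiv.Perm (Fin n), w σ * ∑ i, f i * g (σ i) := by
        rw [Finset.sum_comm]
        simp [Finset.mul_sum]
    _ ≤ ∑ σ : Equiv.Perm (Fin n), w σ * ∑ i, f (Tuple.sort f i) * g (Tuple.sort g i) :=
        Finset.sum_le_sum fun σ _ => mul_le_mul_of_nonneg_left (HW_rearr f g σ) (hw0 σ)
    _ = ∑ i, f (Tuple.sort f i) * g (Tuple.sort g i) := by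
        rw [← Finset.sum_mul, hw1, one_mul]

lemma HW_trace_diag {n : ℕ} (W : Matrix (Fin n) (Fin n) ℂ) (a b : Fin n → ℝ) :
    ((diagonal (fun i => (a i : ℂ)) * W * diagonal (fun j => (b j : ℂ)) * Wᴴ).trace).re
      = ∑ i, ∑ j, Complex.normSq (W i j) * (a i * b j) := by
  have h : (diagonal (fun i => (a i : ℂ)) * W * diagonal (fun j => (b j : ℂ)) * Wᴴ).trace
      = ∑ i, ∑ j, ((Complex.normSq (W i j) * (a i * b j) : ℝ) : ℂ) := by
    rw [Matrix.trace]
    refine Finset.sum_congr rfl fun i _ => ?_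
    rw [Matrix.diag_apply, Matrix.mul_apply]
    refine Finset.sum_congr rfl fun j _ => ?_
    simp only [Matrix.mul_diagonal, Matrix.diagonal_mul, Matrix.conjTranspose_apply]
    rw [show ((a i : ℂ) * W i j * (b j : ℂ)) * star (W i j)
        = (W i j * star (W i j)) * ((a i : ℂ) * (b j : ℂ)) by ring]
    rw [show star (W i j) = (starRingEnd ℂ) (W i j) from rfl, Complex.mul_conj]
    push_cast
    ring
  rw [h]
  push_cast
  simp

lemma HW_trace_mul {n : ℕ} (A B : Matrix (Fin n) (Fin n) ℂ) (hA : A.IsHermitian)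
    (hB : B.IsHermitian) :
    ((A * B).trace).re = ∑ i, ∑ j,
      Complex.normSq ((star (hA.eigenvectorUnitary : Matrix (Fin n) (Fin n) ℂ)
          * (hB.eigenvectorUnitary : Matrix (Fin n) (Fin n) ℂ)) i j)
        * (hA.eigenvalues i * hB.eigenvalues j) := by
  set U := (hA.eigenvectorUnitary : Matrix (Fin n) (Fin n) ℂ) with hU
  set V := (hB.eigenvectorUnitary : Matrix (Fin n) (Fin n) ℂ) with hV
  set W := star U * V with hWdef
  have hsW : star W = star V * U := by rw [hWdef, StarMul.star_mul, star_star]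
  set Da := diagonal (fun i => ((hA.eigenvalues i : ℝ) : ℂ)) with hDa
  set Db := diagonal (fun j => ((hB.eigenvalues j : ℝ) : ℂ)) with hDb
  have key : (A * B).trace = (Da * W * Db * Wᴴ).trace := by
    conv_lhs => rw [hA.spectral_theorem, hB.spectral_theorem, Unitary.conjStarAlgAut_apply,
      Unitary.conjStarAlgAut_apply]
    rw [show (U * diagonal (RCLike.ofReal ∘ hA.eigenvalues) * star U)
          * (V * diagonal (RCLike.ofReal ∘ hB.eigenvalues) * star V)
        = U * (Da * W * Db * star V) by
      simp only [hDa, hDb, hWdef, Matrix.mul_assoc]; rfl]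
    rw [Matrix.trace_mul_comm, ← Matrix.star_eq_conjTranspose, hsW]
    simp only [Matrix.mul_assoc]
  rw [key, hDa, hDb, HW_trace_diag]

lemma HW_S_mem {n : ℕ} (W : Matrix (Fin n) (Fin n) ℂ) (h1 : W * star W = 1)
    (h2 : star W * W = 1) :
    (Matrix.of fun i j => Complex.normSq (W i j)) ∈ doublyStochastic ℝ (Fin n) := by
  rw [mem_doublyStochastic_iff_sum]
  refine ⟨fun i j => Complex.normSq_nonneg _, fun i => ?_, fun j => ?_⟩
  · have := congrArg (fun M => (M i i).re) h1
    simp only [Matrix.mul_apply, Matrix.one_apply_eq, Complex.one_re] at this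
    rw [← this, Complex.re_sum]
    refine Finset.sum_congr rfl fun j _ => ?_
    rw [Matrix.star_apply, show star (W i j) = (starRingEnd ℂ) (W i j) from rfl,
      Complex.mul_conj]
    simp
  · have := congrArg (fun M => (M j j).re) h2
    simp only [Matrix.mul_apply, Matrix.one_apply_eq, Complex.one_re] at this
    rw [← this, Complex.re_sum]
    refine Finset.sum_congr rfl fun i _ => ?_
    rw [Matrix.star_apply, mul_comm, show star (W i j) = (starRingEnd ℂ) (W i j) from rfl,
      Complex.mul_conj]
    simp

end HWaux

/-- Hoffman–Wielandt: for Hermitian `A, B` with eigenvalues listed in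
nondecreasing order, `Σ_i (λ_i(A) − λ_i(B))² ≤ Tr[(A−B)²]`. The sorted eigenvalue
sequences are obtained from Mathlib's eigenvalue functions via `Tuple.sort`. -/
theorem stmt10 {N : ℕ} (A B : Matrix (Fin N) (Fin N) ℂ)
    (hA : A.IsHermitian) (hB : B.IsHermitian) :
    ∑ i : Fin N,
        ((hA.eigenvalues (Tuple.sort hA.eigenvalues i))
          - hB.eigenvalues (Tuple.sort hB.eigenvalues i)) ^ 2
      ≤ (((A - B) * (A - B)).trace).re := by
  set α := hA.eigenvalues with hα
  set β := hB.eigenvalues with hβ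
  set sA := Tuple.sort α
  set sB := Tuple.sort β
  set U := (hA.eigenvectorUnitary : Matrix (Fin N) (Fin N) ℂ) with hU
  set V := (hB.eigenvectorUnitary : Matrix (Fin N) (Fin N) ℂ) with hV
  have hU1 : star U * U = 1 := Matrix.mem_unitaryGroup_iff'.mp (hA.eigenvectorUnitary).2
  have hU2 : U * star U = 1 := Matrix.mem_unitaryGroup_iff.mp (hA.eigenvectorUnitary).2
  have hV1 : star V * V = 1 := Matrix.mem_unitaryGroup_iff'.mp (hB.eigenvectorUnitary).2
  have hV2 : V * star V = 1 := Matrix.mem_unitaryGroup_iff.mp (hB.eigenvectorUnitary).2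
  set W := star U * V with hWdef
  have hsW : star W = star V * U := by rw [hWdef, StarMul.star_mul, star_star]
  have hW1 : W * star W = 1 := by
    rw [hWdef, hsW]
    calc star U * V * (star V * U) = star U * (V * star V * U) := by
          simp only [Matrix.mul_assoc]
      _ = 1 := by rw [hV2, one_mul, hU1]
  have hW2 : star W * W = 1 := by
    rw [hWdef, hsW]
    calc star V * U * (star U * V) = star V * (U * star U * V) := by
          simp only [Matrix.mul_assoc]
      _ = 1 := by rw [hU2, one_mul, hV1]
  set S : Matrix (Fin N) (Fin N) ℝ := Matrix.of fun i j => Complex.normSq (W i j) with hSdef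
  have hSmem : S ∈ doublyStochastic ℝ (Fin N) := HW_S_mem W hW1 hW2
  -- trace computations
  have t3 : ((A * B).trace).re = ∑ i, ∑ j, S i j * (α i * β j) := HW_trace_mul A B hA hB
  have t1 : ((A * A).trace).re = ∑ i, α i ^ 2 := by
    rw [HW_trace_mul A A hA hA, ← hU, hU1]
    refine Finset.sum_congr rfl fun i _ => ?_
    rw [Finset.sum_eq_single i]
    · simp [sq]
      rfl
    · intro j _ hj
      simp [Matrix.one_apply_ne' hj]
    · simp
  have t2 : ((B * B).trace).re = ∑ i, β i ^ 2 := by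
    rw [HW_trace_mul B B hB hB, ← hV, hV1]
    refine Finset.sum_congr rfl fun i _ => ?_
    rw [Finset.sum_eq_single i]
    · simp [sq]
      rfl
    · intro j _ hj
      simp [Matrix.one_apply_ne' hj]
    · simp
  have hexp : ((A - B) * (A - B)).trace
      = (A * A).trace + (B * B).trace - 2 * (A * B).trace := by
    rw [sub_mul, mul_sub, mul_sub, trace_sub, trace_sub, trace_sub, trace_mul_comm B A]
    ring
  have hre : (((A - B) * (A - B)).trace).re
      = (∑ i, α i ^ 2) + (∑ i, β i ^ 2) - 2 * ∑ i, ∑ j, S i j * (α i * β j) := by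
    rw [hexp, ← t1, ← t2, ← t3]
    simp [Complex.sub_re, Complex.add_re, Complex.mul_re]
  have e1 : ∑ i, α (sA i) ^ 2 = ∑ i, α i ^ 2 := Equiv.sum_comp sA fun i => α i ^ 2
  have e2 : ∑ i, β (sB i) ^ 2 = ∑ i, β i ^ 2 := Equiv.sum_comp sB fun i => β i ^ 2
  have key : ∑ i, ∑ j, S i j * (α i * β j) ≤ ∑ i, α (sA i) * β (sB i) := HW_ds α β S hSmem
  have lhs_eq : ∑ i, (α (sA i) - β (sB i)) ^ 2
      = (∑ i, α i ^ 2) + (∑ i, β i ^ 2) - 2 * ∑ i, α (sA i) * β (sB i) := by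
    rw [← e1, ← e2, ← Finset.sum_add_distrib, Finset.mul_sum, ← Finset.sum_sub_distrib]
    refine Finset.sum_congr rfl fun i _ => ?_
    ring
  rw [lhs_eq, hre]
  linarith
end

section
/- Let A and B be N×N Hermitian matrices, and let μ_A, μ_B denote their empirical spectral distributions (uniform measure on eigenvalues). Then the Lévy–Prokhorov distance satisfies d_L(μ_A, μ_B)³ ≤ (1/N) Tr[(A−B)(A−B)*]. -/
open Matrix MeasureTheory Metric ENNReal

section Aux

/-- One-sided Lévy–Prokhorov estimate for uniform atomic measures. -/
lemma lp_side {N : ℕ} (x y : Fin N → ℝ) (c : ℝ) (hc : 0 ≤ c)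
    (hsum : ∑ i, (x i - y i) ^ 2 ≤ N * c ^ 3) (ε : ℝ≥0∞) (B : Set ℝ)
    (hε : ENNReal.ofReal c < ε) (hεtop : ε < ∞) (hB : MeasurableSet B) :
    ((N : ℝ≥0∞)⁻¹ • ∑ i : Fin N, Measure.dirac (x i)) B
      ≤ ((N : ℝ≥0∞)⁻¹ • ∑ i : Fin N, Measure.dirac (y i)) (thickening ε.toReal B) + ε := by
  set t := ε.toReal with ht
  have htc : c < t := by
    have := (ENNReal.toReal_lt_toReal ofReal_ne_top hεtop.ne).2 hε
    rwa [ENNReal.toReal_ofReal hc] at this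
  have ht0 : 0 < t := lt_of_le_of_lt hc htc
  classical
  set K : Finset (Fin N) := Finset.univ.filter (fun i => t ≤ |x i - y i|) with hK
  have key : ∀ i : Fin N, (Measure.dirac (x i)) B
      ≤ (Measure.dirac (y i)) (thickening t B) + (if i ∈ K then 1 else 0) := by
    intro i
    rw [Measure.dirac_apply' _ hB, Measure.dirac_apply' _ isOpen_thickening.measurableSet]
    by_cases hxB : x i ∈ B
    · by_cases hd : |x i - y i| < t
      · have : y i ∈ thickening t B := by
          rw [mem_thickening_iff]
          exact ⟨x i, hxB, by rwa [Real.dist_eq, abs_sub_comm]⟩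
        simp [Set.indicator_of_mem hxB, Set.indicator_of_mem this]
      · have hiK : i ∈ K := by simp [hK, not_lt.1 hd]
        simp only [Set.indicator_of_mem hxB, hiK, if_true, Pi.one_apply]
        exact le_add_self
    · simp [Set.indicator_of_notMem hxB]
  have hcard : ((K.card : ℝ)) * t ^ 2 ≤ N * c ^ 3 := by
    calc (K.card : ℝ) * t ^ 2 = ∑ _i ∈ K, t ^ 2 := by simp [mul_comm]
      _ ≤ ∑ i ∈ K, (x i - y i) ^ 2 := by
          refine Finset.sum_le_sum fun i hi => ?_
          have h1 : t ≤ |x i - y i| := (Finset.mem_filter.1 hi).2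
          rw [← sq_abs (x i - y i)]
          exact pow_le_pow_left₀ ht0.le h1 2
      _ ≤ ∑ i, (x i - y i) ^ 2 := Finset.sum_le_sum_of_subset_of_nonneg
          (Finset.filter_subset _ _) (fun i _ _ => sq_nonneg _)
      _ ≤ N * c ^ 3 := hsum
  have hKε : (N : ℝ≥0∞)⁻¹ * (K.card : ℝ≥0∞) ≤ ε := by
    rcases Nat.eq_zero_or_pos N with hN | hN
    · have : K.card = 0 := by
        rw [Finset.card_eq_zero]
        subst hN
        exact Finset.eq_empty_of_isEmpty K
      simp [this]
    · have hcard2 : (K.card : ℝ) ≤ N * t := by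
        have h3 : c ^ 3 ≤ t ^ 3 := pow_le_pow_left₀ hc htc.le 3
        have : (K.card : ℝ) * t ^ 2 ≤ (N * t) * t ^ 2 := by
          calc (K.card : ℝ) * t ^ 2 ≤ N * c ^ 3 := hcard
            _ ≤ N * t ^ 3 := by
                have : (0:ℝ) ≤ N := Nat.cast_nonneg N
                nlinarith
            _ = (N * t) * t ^ 2 := by ring
        exact le_of_mul_le_mul_right this (by positivity)
      have hε' : ε = ENNReal.ofReal t := (ofReal_toReal hεtop.ne).symm
      have hcast : (K.card : ℝ≥0∞) ≤ (N : ℝ≥0∞) * ε := by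
        rw [hε']
        calc (K.card : ℝ≥0∞) = ENNReal.ofReal (K.card : ℝ) := by
              simp [ENNReal.ofReal_natCast]
          _ ≤ ENNReal.ofReal ((N : ℝ) * t) := ENNReal.ofReal_le_ofReal hcard2
          _ = ENNReal.ofReal (N : ℝ) * ENNReal.ofReal t :=
              ENNReal.ofReal_mul (Nat.cast_nonneg N)
          _ = (N : ℝ≥0∞) * ENNReal.ofReal t := by simp [ENNReal.ofReal_natCast]
      calc (N : ℝ≥0∞)⁻¹ * (K.card : ℝ≥0∞) ≤ (N : ℝ≥0∞)⁻¹ * ((N : ℝ≥0∞) * ε) :=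
            mul_le_mul_right hcast _
        _ = ε := by
            rw [← mul_assoc, ENNReal.inv_mul_cancel (by exact_mod_cast hN.ne') (natCast_ne_top N),
              one_mul]
  rw [Measure.smul_apply, Measure.smul_apply, smul_eq_mul, smul_eq_mul,
    Measure.finset_sum_apply, Measure.finset_sum_apply]
  calc (N : ℝ≥0∞)⁻¹ * ∑ i, (Measure.dirac (x i)) B
      ≤ (N : ℝ≥0∞)⁻¹ * (∑ i, ((Measure.dirac (y i)) (thickening t B)
          + (if i ∈ K then 1 else 0))) :=
        mul_le_mul_right (Finset.sum_le_sum fun i _ => key i) _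
    _ = (N : ℝ≥0∞)⁻¹ * ∑ i, (Measure.dirac (y i)) (thickening t B)
          + (N : ℝ≥0∞)⁻¹ * (K.card : ℝ≥0∞) := by
        rw [Finset.sum_add_distrib, mul_add]
        congr 2
        simp [hK]
    _ ≤ (N : ℝ≥0∞)⁻¹ * ∑ i, (Measure.dirac (y i)) (thickening t B) + ε :=
        add_le_add_right hKε _

/-- Lévy–Prokhorov distance bound for uniform atomic measures. -/
lemma lp_dist {N : ℕ} (x y : Fin N → ℝ) (c : ℝ) (hc : 0 ≤ c)
    (hsum : ∑ i, (x i - y i) ^ 2 ≤ N * c ^ 3) :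
    levyProkhorovDist ((N : ℝ≥0∞)⁻¹ • ∑ i : Fin N, Measure.dirac (x i))
      ((N : ℝ≥0∞)⁻¹ • ∑ i : Fin N, Measure.dirac (y i)) ≤ c := by
  have hsum' : ∑ i, (y i - x i) ^ 2 ≤ N * c ^ 3 := by
    refine le_trans (le_of_eq ?_) hsum
    exact Finset.sum_congr rfl fun i _ => by ring
  have hE := levyProkhorovEDist_le_of_forall
      ((N : ℝ≥0∞)⁻¹ • ∑ i : Fin N, Measure.dirac (x i))
      ((N : ℝ≥0∞)⁻¹ • ∑ i : Fin N, Measure.dirac (y i)) (ENNReal.ofReal c)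
      (fun ε B hε hεtop hB =>
        ⟨lp_side x y c hc hsum ε B hε hεtop hB, lp_side y x c hc hsum' ε B hε hεtop hB⟩)
  exact ENNReal.toReal_le_of_le_ofReal hc hE

lemma trace_cycle_aux {n : Type*} [Fintype n] [DecidableEq n]
    (u v d₁ d₂ : Matrix n n ℂ) :
    (u * d₁ * star u * (v * d₂ * star v)).trace
      = (d₁ * (star u * v) * d₂ * star (star u * v)).trace := by
  rw [Matrix.star_mul, star_star]
  simp only [mul_assoc]
  rw [Matrix.trace_mul_comm]
  simp only [mul_assoc]

variable {N : ℕ} {A B : Matrix (Fin N) (Fin N) ℂ}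

lemma trace_mul_eq (hA : A.IsHermitian) (hB : B.IsHermitian) :
    (A * B).trace
      = ∑ i, ∑ j, (Complex.normSq (((star (hA.eigenvectorUnitary : Matrix (Fin N) (Fin N) ℂ)) *
          (hB.eigenvectorUnitary : Matrix (Fin N) (Fin N) ℂ)) i j) : ℂ)
          * hA.eigenvalues i * hB.eigenvalues j := by
  set U := (hA.eigenvectorUnitary : Matrix (Fin N) (Fin N) ℂ) with hU
  set V := (hB.eigenvectorUnitary : Matrix (Fin N) (Fin N) ℂ) with hV
  set W := star U * V with hW
  set dA : Fin N → ℂ := RCLike.ofReal ∘ hA.eigenvalues with hdA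
  set dB : Fin N → ℂ := RCLike.ofReal ∘ hB.eigenvalues with hdB
  have h1 : (A * B).trace = (diagonal dA * W * diagonal dB * star W).trace := by
    conv_lhs => rw [hA.spectral_theorem, hB.spectral_theorem]
    exact trace_cycle_aux U V (diagonal dA) (diagonal dB)
  rw [h1, Matrix.trace]
  simp only [diag_apply, Matrix.mul_apply, diagonal_apply, star_apply, Finset.sum_mul,
    Finset.mul_sum, RCLike.star_def]
  simp only [mul_ite, ite_mul, zero_mul, mul_zero, Finset.sum_ite_eq, Finset.sum_ite_eq',
    Finset.mem_univ, if_true]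
  refine Finset.sum_congr rfl fun i _ => Finset.sum_congr rfl fun j _ => ?_
  rw [Finset.sum_comm]
  simp only [Finset.sum_ite_eq, Finset.sum_ite_eq', Finset.mem_univ, if_true, ← hW]
  rw [← Complex.mul_conj]
  simp only [hdA, hdB, Function.comp_apply, Complex.coe_algebraMap]
  ring

/-- `Tr(A²) = ∑ λᵢ²` for a Hermitian matrix. -/
lemma trace_sq_eq (hA : A.IsHermitian) :
    (A * A).trace = ∑ i, ((hA.eigenvalues i : ℂ)) ^ 2 := by
  rw [trace_mul_eq hA hA]
  have h1 : (star (hA.eigenvectorUnitary : Matrix (Fin N) (Fin N) ℂ)) *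
      (hA.eigenvectorUnitary : Matrix (Fin N) (Fin N) ℂ) = 1 :=
    Unitary.coe_star_mul_self hA.eigenvectorUnitary
  rw [h1]
  refine Finset.sum_congr rfl fun i _ => ?_
  rw [Finset.sum_eq_single i]
  · simp [Matrix.one_apply_eq]
    ring
  · intro j _ hj
    simp [Matrix.one_apply_ne' hj]
  · simp

/-- The overlap matrix of two Hermitian matrices is doubly stochastic. -/
lemma overlap_doublyStochastic (hA : A.IsHermitian) (hB : B.IsHermitian) :
    Matrix.of (fun i j => Complex.normSq (((star (hA.eigenvectorUnitary :
        Matrix (Fin N) (Fin N) ℂ)) * (hB.eigenvectorUnitary : Matrix (Fin N) (Fin N) ℂ)) i j))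
      ∈ doublyStochastic ℝ (Fin N) := by
  set W := (star (hA.eigenvectorUnitary : Matrix (Fin N) (Fin N) ℂ)) *
      (hB.eigenvectorUnitary : Matrix (Fin N) (Fin N) ℂ) with hWdef
  have hWW : W * star W = 1 := by
    rw [hWdef, Matrix.star_mul, star_star]
    calc (star (hA.eigenvectorUnitary : Matrix (Fin N) (Fin N) ℂ)) *
          (hB.eigenvectorUnitary : Matrix (Fin N) (Fin N) ℂ) *
          ((star (hB.eigenvectorUnitary : Matrix (Fin N) (Fin N) ℂ)) *
            (hA.eigenvectorUnitary : Matrix (Fin N) (Fin N) ℂ))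
        = (star (hA.eigenvectorUnitary : Matrix (Fin N) (Fin N) ℂ)) *
          (((hB.eigenvectorUnitary : Matrix (Fin N) (Fin N) ℂ)) *
            (star (hB.eigenvectorUnitary : Matrix (Fin N) (Fin N) ℂ))) *
            (hA.eigenvectorUnitary : Matrix (Fin N) (Fin N) ℂ) := by noncomm_ring
      _ = 1 := by
          rw [Matrix.mem_unitaryGroup_iff.mp hB.eigenvectorUnitary.2, mul_one,
            Matrix.mem_unitaryGroup_iff'.mp hA.eigenvectorUnitary.2]
  have hsWW : star W * W = 1 := by
    rw [hWdef, Matrix.star_mul, star_star]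
    calc (star (hB.eigenvectorUnitary : Matrix (Fin N) (Fin N) ℂ)) *
          (hA.eigenvectorUnitary : Matrix (Fin N) (Fin N) ℂ) *
          ((star (hA.eigenvectorUnitary : Matrix (Fin N) (Fin N) ℂ)) *
            (hB.eigenvectorUnitary : Matrix (Fin N) (Fin N) ℂ))
        = (star (hB.eigenvectorUnitary : Matrix (Fin N) (Fin N) ℂ)) *
          (((hA.eigenvectorUnitary : Matrix (Fin N) (Fin N) ℂ)) *
            (star (hA.eigenvectorUnitary : Matrix (Fin N) (Fin N) ℂ))) *
            (hB.eigenvectorUnitary : Matrix (Fin N) (Fin N) ℂ) := by noncomm_ring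
      _ = 1 := by
          rw [Matrix.mem_unitaryGroup_iff.mp hA.eigenvectorUnitary.2, mul_one,
            Matrix.mem_unitaryGroup_iff'.mp hB.eigenvectorUnitary.2]
  rw [mem_doublyStochastic_iff_sum]
  refine ⟨fun i j => Complex.normSq_nonneg _, fun i => ?_, fun j => ?_⟩
  · have := congrArg (fun M => M i i) hWW
    simp only [Matrix.mul_apply, Matrix.one_apply_eq, star_apply, RCLike.star_def] at this
    have : (((∑ j, Complex.normSq (W i j) : ℝ)) : ℂ) = ((1 : ℝ) : ℂ) := by
      rw [Complex.ofReal_sum]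
      simp only [Complex.ofReal_one]
      rw [← this]
      exact Finset.sum_congr rfl fun j _ => (Complex.mul_conj (W i j)).symm
    exact_mod_cast this
  · have := congrArg (fun M => M j j) hsWW
    simp only [Matrix.mul_apply, Matrix.one_apply_eq, star_apply, RCLike.star_def] at this
    have : (((∑ i, Complex.normSq (W i j) : ℝ)) : ℂ) = ((1 : ℝ) : ℂ) := by
      rw [Complex.ofReal_sum]
      simp only [Complex.ofReal_one]
      rw [← this]
      refine Finset.sum_congr rfl fun i _ => ?_
      rw [Complex.normSq_eq_conj_mul_self]
    exact_mod_cast this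

/-- Birkhoff step: a doubly stochastic bilinear form is dominated by some permutation. -/
lemma exists_perm_bound {N : ℕ} {P : Matrix (Fin N) (Fin N) ℝ}
    (hP : P ∈ doublyStochastic ℝ (Fin N)) (x y : Fin N → ℝ) :
    ∃ σ : Equiv.Perm (Fin N), ∑ i, ∑ j, P i j * x i * y j ≤ ∑ i, x i * y (σ i) := by
  classical
  obtain ⟨w, hw0, hw1, hsum⟩ := exists_eq_sum_perm_of_mem_doublyStochastic hP
  set S : Equiv.Perm (Fin N) → ℝ := fun σ => ∑ i, x i * y (σ i) with hS
  obtain ⟨σ₀, -, hσ₀⟩ := Finset.exists_max_image (Finset.univ : Finset (Equiv.Perm (Fin N))) S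
    ⟨1, Finset.mem_univ 1⟩
  refine ⟨σ₀, ?_⟩
  have hPij : ∀ i j, P i j = ∑ σ : Equiv.Perm (Fin N), w σ * (σ.permMatrix ℝ) i j := by
    intro i j
    rw [← hsum]
    simp [Matrix.sum_apply, Equiv.Perm.permMatrix, PEquiv.toMatrix_apply, Equiv.toPEquiv_apply]
  have step : ∀ i, ∑ j, P i j * x i * y j
      = ∑ σ : Equiv.Perm (Fin N), w σ * (x i * y (σ i)) := by
    intro i
    calc ∑ j, P i j * x i * y j
        = ∑ j, ∑ σ : Equiv.Perm (Fin N), w σ * (σ.permMatrix ℝ) i j * x i * y j := by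
          simp only [hPij, Finset.sum_mul]
      _ = ∑ σ : Equiv.Perm (Fin N), ∑ j, w σ * (σ.permMatrix ℝ) i j * x i * y j :=
          Finset.sum_comm
      _ = ∑ σ : Equiv.Perm (Fin N), w σ * (x i * y (σ i)) := by
          refine Finset.sum_congr rfl fun σ _ => ?_
          simp [Equiv.Perm.permMatrix, PEquiv.toMatrix_apply, Equiv.toPEquiv_apply, mul_ite,
            ite_mul, mul_zero, zero_mul, mul_one, one_mul, Finset.sum_ite_eq,
            Finset.sum_ite_eq', mul_assoc]
  calc ∑ i, ∑ j, P i j * x i * y j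
      = ∑ σ : Equiv.Perm (Fin N), w σ * S σ := by
        simp only [step]
        rw [Finset.sum_comm]
        simp only [hS, Finset.mul_sum]
    _ ≤ ∑ σ : Equiv.Perm (Fin N), w σ * S σ₀ :=
        Finset.sum_le_sum fun σ _ => mul_le_mul_of_nonneg_left (hσ₀ σ (Finset.mem_univ σ)) (hw0 σ)
    _ = S σ₀ := by rw [← Finset.sum_mul, hw1, one_mul]


/-- Hoffman–Wielandt: some permutation matching of eigenvalues has ℓ² cost at most
the Frobenius norm of the difference. -/
lemma hoffman_wielandt (hA : A.IsHermitian) (hB : B.IsHermitian) :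
    ∃ σ : Equiv.Perm (Fin N), ∑ i, (hA.eigenvalues i - hB.eigenvalues (σ i)) ^ 2
      ≤ (((A - B) * (A - B)ᴴ).trace).re := by
  classical
  set lam := hA.eigenvalues with hlam
  set mu := hB.eigenvalues with hmu
  set W := (star (hA.eigenvectorUnitary : Matrix (Fin N) (Fin N) ℂ)) *
      (hB.eigenvectorUnitary : Matrix (Fin N) (Fin N) ℂ) with hWdef
  obtain ⟨σ, hσ⟩ := exists_perm_bound (overlap_doublyStochastic hA hB) lam mu
  refine ⟨σ, ?_⟩
  have htr : (((A - B) * (A - B)ᴴ).trace).re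
      = ∑ i, lam i ^ 2 + ∑ j, mu j ^ 2
        - 2 * ∑ i, ∑ j, Complex.normSq (W i j) * lam i * mu j := by
    have hherm : (A - B)ᴴ = A - B := hA.sub hB
    have hexp : (A - B) * (A - B) = A * A - A * B - B * A + B * B := by noncomm_ring
    have hba : (B * A).trace = (A * B).trace := Matrix.trace_mul_comm B A
    rw [hherm, hexp, Matrix.trace_add, Matrix.trace_sub, Matrix.trace_sub, hba,
      trace_sq_eq hA, trace_sq_eq hB, trace_mul_eq hA hB]
    simp only [Complex.add_re, Complex.sub_re]
    have h1 : (∑ i, ((lam i : ℂ)) ^ 2).re = ∑ i, lam i ^ 2 := by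
      norm_cast
    have h2 : (∑ j, ((mu j : ℂ)) ^ 2).re = ∑ j, mu j ^ 2 := by
      norm_cast
    have h3 : (∑ i, ∑ j, ((Complex.normSq (W i j) : ℂ)) * lam i * mu j).re
        = ∑ i, ∑ j, Complex.normSq (W i j) * lam i * mu j := by
      norm_cast
    rw [h1, h2, h3]
    ring
  have hperm : ∑ i, ∑ j, Complex.normSq (W i j) * lam i * mu j ≤ ∑ i, lam i * mu (σ i) := by
    simpa using hσ
  have hresum : ∑ i, mu (σ i) ^ 2 = ∑ j, mu j ^ 2 := Equiv.sum_comp σ (fun j => mu j ^ 2)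
  calc ∑ i, (lam i - mu (σ i)) ^ 2
      = ∑ i, lam i ^ 2 + ∑ j, mu j ^ 2 - 2 * ∑ i, lam i * mu (σ i) := by
        rw [← hresum]
        rw [← Finset.sum_add_distrib, Finset.mul_sum, ← Finset.sum_sub_distrib]
        exact Finset.sum_congr rfl fun i _ => by ring
    _ ≤ ∑ i, lam i ^ 2 + ∑ j, mu j ^ 2
        - 2 * ∑ i, ∑ j, Complex.normSq (W i j) * lam i * mu j := by linarith
    _ = (((A - B) * (A - B)ᴴ).trace).re := htr.symm

end Aux


/-- The empirical spectral distribution of a Hermitian matrix: the uniform probability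
measure on its eigenvalues, `ESD(A) = (1/N) Σ_i δ_{λ_i(A)}`. -/
noncomputable def esd {N : ℕ} {A : Matrix (Fin N) (Fin N) ℂ} (hA : A.IsHermitian) :
    Measure ℝ :=
  ((N : ENNReal))⁻¹ • ∑ i : Fin N, Measure.dirac (hA.eigenvalues i)

/-- Hoffman–Wielandt, Lévy–Prokhorov form: for Hermitian `A, B`,
`d_L(ESD(A), ESD(B))³ ≤ (1/N) Tr[(A−B)(A−B)*]`. -/
theorem stmt11 {N : ℕ} (A B : Matrix (Fin N) (Fin N) ℂ)
    (hA : A.IsHermitian) (hB : B.IsHermitian) :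
    (levyProkhorovDist (esd hA) (esd hB)) ^ 3
      ≤ (N : ℝ)⁻¹ * (((A - B) * (A - B)ᴴ).trace).re := by
  rcases Nat.eq_zero_or_pos N with hN | hN
  · subst hN
    have he : esd hA = esd hB := by
      simp [esd]
    rw [he, levyProkhorovDist_self]
    simp [Matrix.trace]
  · obtain ⟨σ, hkey⟩ := hoffman_wielandt hA hB
    set R : ℝ := (((A - B) * (A - B)ᴴ).trace).re with hR
    have hR0 : 0 ≤ R := le_trans (Finset.sum_nonneg fun i _ => sq_nonneg _) hkey
    have hNR : (0:ℝ) ≤ (N : ℝ)⁻¹ * R := by positivity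
    have hNne : (N : ℝ) ≠ 0 := Nat.cast_ne_zero.2 hN.ne'
    set c : ℝ := ((N : ℝ)⁻¹ * R) ^ ((1:ℝ)/3) with hc
    have hc0 : 0 ≤ c := Real.rpow_nonneg hNR _
    have hc3 : c ^ 3 = (N : ℝ)⁻¹ * R := by
      rw [hc, ← Real.rpow_natCast (((N : ℝ)⁻¹ * R) ^ ((1:ℝ)/3)) 3, ← Real.rpow_mul hNR]
      norm_num
    have hsum : ∑ i, (hA.eigenvalues i - hB.eigenvalues (σ i)) ^ 2 ≤ N * c ^ 3 := by
      rw [hc3, ← mul_assoc, mul_inv_cancel₀ hNne, one_mul]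
      exact hkey
    have hesdB : esd hB = (N : ℝ≥0∞)⁻¹ • ∑ i : Fin N, Measure.dirac (hB.eigenvalues (σ i)) := by
      rw [esd]
      congr 1
      exact (Equiv.sum_comp σ (fun i => Measure.dirac (hB.eigenvalues i))).symm
    have hd : levyProkhorovDist (esd hA) (esd hB) ≤ c := by
      rw [esd, hesdB]
      exact lp_dist _ _ c hc0 hsum
    have hd0 : 0 ≤ levyProkhorovDist (esd hA) (esd hB) := ENNReal.toReal_nonneg
    calc (levyProkhorovDist (esd hA) (esd hB)) ^ 3 ≤ c ^ 3 := pow_le_pow_left₀ hd0 hd 3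
      _ = (N : ℝ)⁻¹ * R := hc3
end
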